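/- For any 3-CNF formula X, the 4-CNF formula obtained by adding a fresh variable v₀ to every clause of X, and then splitting each 4-clause (a∨b∨c∨d) into (a∨b∨x)∧(¬x∨c∨d) with a fresh variable x per clause, yields a 3-CNF formula X' such that (1) X' is satisfiable by the assignment making v₀ true (extended appropriately), and (2) X' has a satisfying assignment with v₀ false if and only if X is satisfiable. -/

import Mathlib

/-- A literal: a variable (a natural number) together with a polarity. -/
abbrev Lit := ℕ × Bool

/-- Value of a literal under an assignment. -/
def litVal (σ : ℕ → Bool) (l : Lit) : Bool := if l.2 then σ l.1 else !(σ l.1)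

/-- A clause with exactly three literals. -/
abbrev Clause3 := Lit × Lit × Lit

/-- Value of a 3-clause under an assignment. -/
def clause3Val (σ : ℕ → Bool) (C : Clause3) : Bool :=
  litVal σ C.1 || litVal σ C.2.1 || litVal σ C.2.2

/-- Satisfaction of a 3-CNF formula, given as a list of 3-clauses. -/
def Sat3 (σ : ℕ → Bool) (F : List Clause3) : Prop := ∀ C ∈ F, clause3Val σ C = true

/-- A variable occurs in a 3-clause. -/
def occursClause3 (v : ℕ) (C : Clause3) : Prop :=
  C.1.1 = v ∨ C.2.1.1 = v ∨ C.2.2.1 = v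

/-- A variable occurs in a 3-CNF formula. -/
def occurs3 (v : ℕ) (F : List Clause3) : Prop := ∃ C ∈ F, occursClause3 v C

/-- Add the fresh variable `v₀` to each clause `(a ∨ b ∨ c)` of `X`, obtaining
`(a ∨ b ∨ c ∨ v₀)`, and split it into `(a ∨ b ∨ xᵢ) ∧ (¬xᵢ ∨ c ∨ v₀)` using a
fresh variable `xs i` for the `i`-th clause. -/
def splitAdd (v0 : ℕ) (xs : ℕ → ℕ) (X : List Clause3) : List Clause3 :=
  (X.zipIdx.map Prod.swap).flatMap fun ic =>
    [(ic.2.1, ic.2.2.1, ((xs ic.1, true) : Lit)),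
     (((xs ic.1, false) : Lit), ic.2.2.2, ((v0, true) : Lit))]

theorem mem_swapZipIdx_iff {α : Type} {i : ℕ} {a : α} {l : List α} :
    (i, a) ∈ l.zipIdx.map Prod.swap ↔ l[i]? = some a := by
  constructor
  · intro hm
    obtain ⟨y, hy, hy'⟩ := List.mem_map.1 hm
    obtain ⟨y1, y2⟩ := y
    simp only [Prod.swap_prod_mk, Prod.mk.injEq] at hy'
    obtain ⟨rfl, rfl⟩ := hy'
    exact List.mem_zipIdx_iff_getElem?.1 hy
  · intro h
    exact List.mem_map.2 ⟨(a, i), List.mem_zipIdx_iff_getElem?.2 h, rfl⟩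

theorem splitAdd_correct (X : List Clause3) (v0 : ℕ) (xs : ℕ → ℕ)
    (hv0 : ¬ occurs3 v0 X) (hxs : ∀ i, ¬ occurs3 (xs i) X)
    (hinj : Function.Injective xs) (hne : ∀ i, xs i ≠ v0) :
    (∃ σ : ℕ → Bool, σ v0 = true ∧ Sat3 σ (splitAdd v0 xs X)) ∧
    ((∃ σ : ℕ → Bool, σ v0 = false ∧ Sat3 σ (splitAdd v0 xs X)) ↔
      (∃ σ : ℕ → Bool, Sat3 σ X)) := by
  classical
  have hmem : ∀ C : Clause3, C ∈ splitAdd v0 xs X ↔ ∃ ic ∈ (X.zipIdx.map Prod.swap),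
      C = (ic.2.1, ic.2.2.1, ((xs ic.1, true) : Lit)) ∨
      C = (((xs ic.1, false) : Lit), ic.2.2.2, ((v0, true) : Lit)) := by
    intro C
    simp only [splitAdd, List.mem_flatMap, List.mem_cons, List.not_mem_nil, or_false]
  refine ⟨⟨fun _ => true, rfl, ?_⟩, ?_, ?_⟩
  · intro C hC
    rw [hmem] at hC
    obtain ⟨ic, _, h | h⟩ := hC <;> subst h <;> simp [clause3Val, litVal]
  · rintro ⟨σ, hσ0, hσ⟩
    refine ⟨σ, ?_⟩
    intro C hC
    obtain ⟨i, hi, e⟩ := List.getElem_of_mem hC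
    have hiC : (i, C) ∈ (X.zipIdx.map Prod.swap) := by
      rw [mem_swapZipIdx_iff]
      simp [List.getElem?_eq_getElem hi, e]
    have h1 := hσ _ ((hmem _).2 ⟨(i, C), hiC, Or.inl rfl⟩)
    have h2 := hσ _ ((hmem _).2 ⟨(i, C), hiC, Or.inr rfl⟩)
    simp only [clause3Val] at h1 h2 ⊢
    rw [show litVal σ ((xs i, true) : Lit) = σ (xs i) from rfl] at h1
    rw [show litVal σ ((xs i, false) : Lit) = !(σ (xs i)) from rfl,
        show litVal σ ((v0, true) : Lit) = σ v0 from rfl, hσ0] at h2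
    cases hx : σ (xs i) <;> rw [hx] at h1 h2 <;> simp at h1 h2 <;>
      simp [Bool.or_eq_true] at * <;> tauto
  · rintro ⟨σ, hσ⟩
    set τ : ℕ → Bool := fun v =>
      if v = v0 then false
      else match (X.zipIdx.map Prod.swap).find? (fun ic => xs ic.1 == v) with
        | some ic => !(litVal σ ic.2.1 || litVal σ ic.2.2.1)
        | none => σ v with hτ
    have hag : ∀ v, occurs3 v X → τ v = σ v := by
      intro v hv
      have hvne : v ≠ v0 := fun h => hv0 (h ▸ hv)
      rw [hτ]
      simp only [hvne, if_false]
      cases hfind : (X.zipIdx.map Prod.swap).find? (fun ic => xs ic.1 == v) with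
      | none => simp
      | some ic =>
        have := List.find?_some hfind
        simp only [beq_iff_eq] at this
        exact absurd (this ▸ hv) (hxs ic.1)
    have hagl : ∀ C ∈ X, ∀ l : Lit, occursClause3 l.1 C → litVal τ l = litVal σ l := by
      intro C hC l hl
      have : τ l.1 = σ l.1 := hag l.1 ⟨C, hC, hl⟩
      simp [litVal, this]
    have hτ0 : τ v0 = false := by rw [hτ]; simp
    have hB : ∀ i C, (i, C) ∈ (X.zipIdx.map Prod.swap) → τ (xs i) = !(litVal σ C.1 || litVal σ C.2.1) := by
      intro i C hiC
      have hsome : ((X.zipIdx.map Prod.swap).find? (fun ic => xs ic.1 == xs i)).isSome = true := by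
        rw [List.find?_isSome]
        exact ⟨(i, C), hiC, by simp⟩
      obtain ⟨jc, hjc⟩ := Option.isSome_iff_exists.1 hsome
      have hpred := List.find?_some hjc
      simp only [beq_iff_eq] at hpred
      have hji : jc.1 = i := hinj hpred
      have hjmem := List.mem_of_find?_eq_some hjc
      rw [mem_swapZipIdx_iff] at hjmem hiC
      have hC2 : jc.2 = C := by
        have : some jc.2 = some C := by rw [← hjmem, hji]; exact hiC
        exact Option.some.inj this
      rw [hτ]
      show (if xs i = v0 then false
        else match (X.zipIdx.map Prod.swap).find? (fun ic => xs ic.1 == xs i) with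
          | some ic => !(litVal σ ic.2.1 || litVal σ ic.2.2.1)
          | none => σ (xs i)) = _
      rw [if_neg (hne i), hjc]
      show (!(litVal σ jc.2.1 || litVal σ jc.2.2.1)) = (!(litVal σ C.1 || litVal σ C.2.1))
      rw [hC2]
    refine ⟨τ, hτ0, ?_⟩
    intro C' hC'
    rw [hmem] at hC'
    obtain ⟨⟨i, C⟩, hiC, h | h⟩ := hC' <;> subst h
    · have hCX : C ∈ X := by
        rw [mem_swapZipIdx_iff] at hiC
        obtain ⟨h, e⟩ := List.getElem?_eq_some_iff.1 hiC
        have := List.getElem_mem h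
        rwa [e] at this
      have e1 := hagl C hCX C.1 (Or.inl rfl)
      have e2 := hagl C hCX C.2.1 (Or.inr (Or.inl rfl))
      have e3 := hB i C hiC
      simp only [clause3Val]
      rw [show litVal τ ((xs i, true) : Lit) = τ (xs i) from rfl, e1, e2, e3]
      cases hab : (litVal σ C.1 || litVal σ C.2.1) <;> simp [hab]
    · have hCX : C ∈ X := by
        rw [mem_swapZipIdx_iff] at hiC
        obtain ⟨h, e⟩ := List.getElem?_eq_some_iff.1 hiC
        have := List.getElem_mem h
        rwa [e] at this
      have e3 := hagl C hCX C.2.2 (Or.inr (Or.inr rfl))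
      have eB := hB i C hiC
      have hsat := hσ C hCX
      simp only [clause3Val] at hsat ⊢
      rw [show litVal τ ((xs i, false) : Lit) = !(τ (xs i)) from rfl,
          show litVal τ ((v0, true) : Lit) = τ v0 from rfl, hτ0, eB, e3, Bool.not_not]
      simpa using hsat
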